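/- For all integers n ≥ 1 and all integers d with 1 ≤ d ≤ n, one has (n·d − 1)·(n − ⌊n/d⌋ + 1) ≥ (n² − 1)·(d − 1). -/

import Mathlib

lemma density_exponent_ineq_int (n d q r : ℤ) (hd : 2 ≤ d) (hq : 1 ≤ q)
    (hr0 : 0 ≤ r) (hr : r < d) (hn : n = d * q + r) :
    (n ^ 2 - 1) * (d - 1) ≤ (n * d - 1) * (n - q + 1) := by
  have hn1 : 1 ≤ n := by nlinarith
  nlinarith [mul_nonneg (mul_nonneg (by linarith : (0:ℤ) ≤ n) (by linarith : (0:ℤ) ≤ d - 2)) (by linarith : (0:ℤ) ≤ q - 1),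
    mul_nonneg hr0 (by linarith : (0:ℤ) ≤ q - 1),
    mul_nonneg hr0 (by linarith : (0:ℤ) ≤ d - 2),
    mul_nonneg (mul_nonneg hr0 hr0) (by linarith : (0:ℤ) ≤ q - 1),
    mul_nonneg (mul_nonneg (by linarith : (0:ℤ) ≤ n) hr0) (by linarith : (0:ℤ) ≤ d - r),
    mul_pos (by linarith : (0:ℤ) < n) (by linarith : (0:ℤ) < d - 1)]

/-- The arithmetic inequality `R_G(Q) ≥ S_G(Q'_d)` from the proof of the
density-exponent theorem: for all integers `n ≥ 1` and `1 ≤ d ≤ n`,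
`(n·d − 1)·(n − ⌊n/d⌋ + 1) ≥ (n² − 1)·(d − 1)`.  Here `n / d` is natural
(floor) division. -/
theorem density_exponent_ineq_nonextremal (n d : ℕ) (hn : 1 ≤ n) (hd : 1 ≤ d)
    (hdn : d ≤ n) :
    (n ^ 2 - 1) * (d - 1) ≤ (n * d - 1) * (n - n / d + 1) := by
  rcases Nat.eq_or_lt_of_le hd with h1 | hd2
  · simp [← h1]
  · have hq : n / d ≤ n := Nat.div_le_self n d
    have hn2 : 1 ≤ n ^ 2 := Nat.one_le_pow _ _ hn
    have hnd : 1 ≤ n * d := Nat.one_le_iff_ne_zero.mpr (by positivity)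
    have hmod : n % d + d * (n / d) = n := Nat.mod_add_div n d
    have hr : n % d < d := Nat.mod_lt n (by omega)
    have hq1 : 1 ≤ n / d := (Nat.one_le_div_iff (by omega)).mpr hdn
    zify [hq, hn2, hnd, hd]
    rw [show ((n:ℤ) / (d:ℤ)) = ((n / d : ℕ) : ℤ) from (Int.natCast_div n d).symm]
    exact density_exponent_ineq_int _ _ _ ((n % d : ℕ) : ℤ)
      (by exact_mod_cast hd2) (by exact_mod_cast hq1)
      (Int.natCast_nonneg _) (by exact_mod_cast hr) (by exact_mod_cast (Nat.div_add_mod n d).symm)
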